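/- For every η ∈ Y there exists N ∈ ℤ≥0 such that for every μ ∈ Y satisfying ⟨μ,α⟩ ≥ N for all simple roots α, and for every w ∈ W_f with w ≠ 1, the element w(μ+ρ∨) − (μ+η+ρ∨) of ℚ⊗Y is not a ℤ≥0-linear combination of positive coroots. -/

import Mathlib

open scoped Classical TensorProduct

noncomputable section

namespace SemiInf

/-- The data of a root datum together with its (finite) Weyl group:
finite-rank free `ℤ`-modules `X` and `Y` with a pairing, a finite group `W`
acting on both, a finite set of roots with a subset of positive roots, and a
coroot map. The axioms are collected in `Ctx.IsRootDatum`. -/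
structure Ctx where
  X : Type
  Y : Type
  [addX : AddCommGroup X]
  [addY : AddCommGroup Y]
  W : Type
  [grpW : Group W]
  [finW : Fintype W]
  [actX : DistribMulAction W X]
  [actY : DistribMulAction W Y]
  pair : Y →+ X →+ ℤ
  roots : Finset X
  pos : Finset X
  coroot : X → Y

attribute [instance] Ctx.addX Ctx.addY Ctx.grpW Ctx.finW Ctx.actX Ctx.actY

namespace Ctx

variable (C : Ctx)

/-- The axioms of a root datum (free finite-rank lattices, perfect pairing,
finite reduced crystallographic root system with a system of positive roots),
with `W` its Weyl group acting faithfully on `X` and `Y`. -/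
structure IsRootDatum : Prop where
  free_X : Module.Free ℤ C.X
  finite_X : Module.Finite ℤ C.X
  free_Y : Module.Free ℤ C.Y
  finite_Y : Module.Finite ℤ C.Y
  perfect_left : Function.Bijective fun y : C.Y => C.pair y
  perfect_right : Function.Bijective fun x : C.X => C.pair.flip x
  pos_subset : C.pos ⊆ C.roots
  root_decomp : ∀ α ∈ C.roots, α ∈ C.pos ∨ -α ∈ C.pos
  pos_neg_disjoint : ∀ α ∈ C.pos, -α ∉ C.pos
  zero_not_root : (0 : C.X) ∉ C.roots
  reduced : ∀ α ∈ C.roots, ∀ n : ℤ, n • α ∈ C.roots → n = 1 ∨ n = -1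
  coroot_self : ∀ α ∈ C.roots, C.pair (C.coroot α) α = 2
  isReflection : ∀ α ∈ C.roots, ∃ s : C.W,
    (∀ x : C.X, s • x = x - C.pair (C.coroot α) x • α) ∧
    (∀ y : C.Y, s • y = y - C.pair y α • C.coroot α)
  weyl_gen : ∀ w : C.W, w ∈ Subgroup.closure {s : C.W | ∃ α ∈ C.roots,
    (∀ x : C.X, s • x = x - C.pair (C.coroot α) x • α) ∧
    (∀ y : C.Y, s • y = y - C.pair y α • C.coroot α)}
  faithful_X : ∀ w : C.W, (∀ x : C.X, w • x = x) → w = 1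
  faithful_Y : ∀ w : C.W, (∀ y : C.Y, w • y = y) → w = 1
  pair_inv : ∀ (w : C.W) (y : C.Y) (x : C.X), C.pair (w • y) (w • x) = C.pair y x
  roots_stable : ∀ (w : C.W), ∀ α ∈ C.roots, w • α ∈ C.roots
  smul_coroot : ∀ (w : C.W), ∀ α ∈ C.roots, w • C.coroot α = C.coroot (w • α)
  exists_regular_X : ∃ ξ : C.X, ∀ α ∈ C.pos, 0 < C.pair (C.coroot α) ξ
  exists_regular_Y : ∃ η : C.Y, ∀ α ∈ C.pos, 0 < C.pair η α

/-- The length function of the finite Weyl group: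
`ℓ(w) = #{α ∈ 𝔯₊ : w(α) ∈ −𝔯₊}`. -/
def lenW (w : C.W) : ℕ := (C.pos.filter fun α => -(w • α) ∈ C.pos).card

/-- `w` is the longest element of the finite Weyl group iff it maps every
positive root to a negative root. -/
def IsLongest (w : C.W) : Prop := ∀ α ∈ C.pos, -(w • α) ∈ C.pos

/-- The set `Y₊` of dominant cocharacters. -/
def Ypos : Set C.Y := {l | ∀ α ∈ C.pos, 0 ≤ C.pair l α}

/-- The set `Y₊₊` of strictly dominant cocharacters. -/
def Yppos : Set C.Y := {l | ∀ α ∈ C.pos, 0 < C.pair l α}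

/-- The action of `W` on `Multiplicative Y`, as a homomorphism to `MulAut`. -/
def φext : C.W →* MulAut (Multiplicative C.Y) where
  toFun w :=
    { toFun := fun y => Multiplicative.ofAdd (w • Multiplicative.toAdd y)
      invFun := fun y => Multiplicative.ofAdd (w⁻¹ • Multiplicative.toAdd y)
      left_inv := fun y => by simp
      right_inv := fun y => by simp
      map_mul' := fun a b => by simp [smul_add] }
  map_one' := by
    apply MulEquiv.ext
    intro y
    simp
  map_mul' w₁ w₂ := by
    apply MulEquiv.ext
    intro y
    simp [mul_smul]

/-- The extended affine Weyl group `W_ext = W_f ⋉ Y`. -/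
abbrev Wext : Type := Multiplicative C.Y ⋊[C.φext] C.W

/-- The translation element `t_λ ∈ W_ext` associated with `λ ∈ Y`. -/
def t (l : C.Y) : C.Wext := SemidirectProduct.inl (Multiplicative.ofAdd l)

/-- The canonical embedding of the finite Weyl group in `W_ext`. -/
def σ (w : C.W) : C.Wext := SemidirectProduct.inr w

/-- The length function on `W_ext`, defined by
`ℓ(w t_λ) = Σ_{α ∈ 𝔯₊, w(α) ∈ 𝔯₊} |⟨λ,α⟩| + Σ_{α ∈ 𝔯₊, w(α) ∈ −𝔯₊} |1 − ⟨λ,α⟩|`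
(an element `g` of the semidirect product equals `w t_λ` for `w = g.right`
and `λ = w⁻¹ • g.left`). -/
def len (g : C.Wext) : ℕ :=
  ∑ α ∈ C.pos,
    if g.right • α ∈ C.pos
      then (C.pair (g.right⁻¹ • Multiplicative.toAdd g.left) α).natAbs
      else ((1 : ℤ) - C.pair (g.right⁻¹ • Multiplicative.toAdd g.left) α).natAbs

/-- The coroot lattice `ℤ𝔯∨ ⊆ Y`. -/
def corootLattice : AddSubgroup C.Y := AddSubgroup.closure (C.coroot '' ↑C.roots)

/-- The affine Weyl group `W_aff = W_f ⋉ ℤ𝔯∨`, as a subgroup of `W_ext`. -/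
def Waff : Subgroup C.Wext :=
  Subgroup.closure ((fun l => C.t l) '' ↑C.corootLattice ∪ Set.range C.σ)

/-- The set of elements of length `1` of `W_aff` (the simple affine
reflections). -/
def Saff : Set C.Wext := {g | g ∈ C.Waff ∧ C.len g = 1}

/-- The set `Ω` of elements of length `0` of `W_ext`. -/
def OmegaSet : Set C.Wext := {g | C.len g = 0}

/-- The Bruhat order on `W_aff`: `u ≤ v` iff some reduced expression of `v`
(as a word in `S_aff`) admits a subword which is an expression of `u`. -/
def bruhatAff (u v : C.Wext) : Prop :=
  ∃ l : List C.Wext, (∀ s ∈ l, s ∈ C.Saff) ∧ l.prod = v ∧ l.length = C.len v ∧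
    ∃ l' : List C.Wext, l'.Sublist l ∧ l'.prod = u

/-- The Bruhat order on `W_ext`, extending the Bruhat order of `W_aff` by
`ω u ≤ ω' v` iff `ω = ω'` and `u ≤ v`, for `ω, ω' ∈ Ω` and `u, v ∈ W_aff`. -/
def bruhat (x y : C.Wext) : Prop :=
  ∃ ω u v : C.Wext, ω ∈ C.OmegaSet ∧ u ∈ C.Waff ∧ v ∈ C.Waff ∧
    x = ω * u ∧ y = ω * v ∧ C.bruhatAff u v

/-- The set `W_ext⁺` of `w ∈ W_ext` such that `ℓ(t_μ w) = ℓ(t_μ) + ℓ(w)` for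
every dominant `μ`. -/
def WextPlus : Set C.Wext :=
  {w | ∀ μ ∈ C.Ypos, C.len (C.t μ * w) = C.len (C.t μ) + C.len w}

/-- The semiinfinite order on `W_ext`. -/
def siLE (w y : C.Wext) : Prop :=
  ∃ μ : C.Y, C.t μ * w ∈ C.WextPlus ∧ C.t μ * y ∈ C.WextPlus ∧
    C.bruhat (C.t μ * w) (C.t μ * y)

/-- The rational vector space `ℚ ⊗ Y`. -/
abbrev QY : Type := ℚ ⊗[ℤ] C.Y

/-- The canonical map `Y → ℚ ⊗ Y`. -/
def ι : C.Y →ₗ[ℤ] C.QY := TensorProduct.mk ℤ ℚ C.Y 1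

/-- The finite set of positive coroots. -/
def posCoroots : Finset C.Y := C.pos.image C.coroot

/-- Half the sum of the positive coroots, as an element of `ℚ ⊗ Y`. -/
def rhoCheck : C.QY := (2⁻¹ : ℚ) ⊗ₜ[ℤ] (∑ β ∈ C.posCoroots, β)

/-- The set of Kostant partitions of `v ∈ ℚ ⊗ Y`: functions
`φ : 𝔯∨₊ → ℤ≥0` with `Σ_α φ(α)·α = v`. -/
def KostantSet (v : C.QY) : Set (↥C.posCoroots → ℕ) :=
  {φ | ∑ β : ↥C.posCoroots, (φ β) • C.ι (β : C.Y) = v}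

/-- Kostant's partition function. -/
def KostantP (v : C.QY) : ℕ := (C.KostantSet v).ncard

/-- The action of `w ∈ W` on `ℚ ⊗ Y`. -/
def actQ (w : C.W) : C.QY →ₗ[ℤ] C.QY :=
  LinearMap.lTensor ℚ ((DistribMulAction.toAddMonoidHom C.Y w).toIntLinearMap)

/-- The simple roots: positive roots which are not sums of two positive
roots. -/
def simpleRoots : Finset C.X :=
  C.pos.filter fun α => ¬ ∃ β ∈ C.pos, ∃ γ ∈ C.pos, α = β + γ

end Ctx

end SemiInf

namespace SemiInf
namespace Aux

open Ctx

variable {C : Ctx} (h : C.IsRootDatum)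

/-- A chosen reflection for each root (1 if not a root). -/
noncomputable def refl0 (γ : C.X) : C.W :=
  if hγ : γ ∈ C.roots then (h.isReflection γ hγ).choose else 1

lemma refl0_actX {γ : C.X} (hγ : γ ∈ C.roots) (x : C.X) :
    refl0 h γ • x = x - C.pair (C.coroot γ) x • γ := by
  simp only [refl0, dif_pos hγ]
  exact (h.isReflection γ hγ).choose_spec.1 x

lemma refl0_actY {γ : C.X} (hγ : γ ∈ C.roots) (y : C.Y) :
    refl0 h γ • y = y - C.pair y γ • C.coroot γ := by
  simp only [refl0, dif_pos hγ]
  exact (h.isReflection γ hγ).choose_spec.2 y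

include h

lemma eq_of_actX {u v : C.W} (huv : ∀ x : C.X, u • x = v • x) : u = v := by
  have key : ∀ x : C.X, (v⁻¹ * u) • x = x := by
    intro x
    rw [mul_smul, huv, inv_smul_smul]
  have h1 := h.faithful_X _ key
  exact (inv_mul_eq_one.mp h1).symm

lemma refl0_self {γ : C.X} (hγ : γ ∈ C.roots) : refl0 h γ • γ = -γ := by
  rw [refl0_actX h hγ, h.coroot_self γ hγ]
  abel

lemma neg_mem_roots {γ : C.X} (hγ : γ ∈ C.roots) : -γ ∈ C.roots := by
  rw [← refl0_self h hγ]
  exact h.roots_stable _ γ hγ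

omit h in
lemma pair_zsmul (y : C.Y) (n : ℤ) (x : C.X) : C.pair y (n • x) = n * C.pair y x :=
  (C.pair y).map_zsmul n x

lemma refl0_sq {γ : C.X} (hγ : γ ∈ C.roots) : refl0 h γ * refl0 h γ = 1 := by
  refine eq_of_actX h fun x => ?_
  rw [mul_smul, one_smul, refl0_actX h hγ, refl0_actX h hγ, map_sub, pair_zsmul,
    h.coroot_self γ hγ]
  module

lemma refl0_inv {γ : C.X} (hγ : γ ∈ C.roots) : (refl0 h γ)⁻¹ = refl0 h γ := by
  rw [inv_eq_iff_mul_eq_one, refl0_sq h hγ]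

lemma coroot_neg {γ : C.X} (hγ : γ ∈ C.roots) : C.coroot (-γ) = -C.coroot γ := by
  have h1 := h.smul_coroot (refl0 h γ) γ hγ
  rw [refl0_self h hγ] at h1
  rw [← h1, refl0_actY h hγ, h.coroot_self γ hγ]
  abel

lemma refl0_neg {γ : C.X} (hγ : γ ∈ C.roots) : refl0 h (-γ) = refl0 h γ := by
  refine eq_of_actX h fun x => ?_
  rw [refl0_actX h (neg_mem_roots h hγ), refl0_actX h hγ, coroot_neg h hγ, map_neg,
    AddMonoidHom.neg_apply]
  module

lemma pair_inv' (w : C.W) (y : C.Y) (x : C.X) : C.pair y (w • x) = C.pair (w⁻¹ • y) x := by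
  have key := h.pair_inv w⁻¹ y (w • x)
  rw [inv_smul_smul] at key
  exact key.symm

lemma pair_inv'' (w : C.W) (y : C.Y) (x : C.X) : C.pair (w • y) x = C.pair y (w⁻¹ • x) := by
  rw [pair_inv' h w⁻¹ y x, inv_inv]

omit h in
lemma smul_zsmul (w : C.W) (n : ℤ) (x : C.X) : w • (n • x) = n • (w • x) :=
  (DistribMulAction.toAddMonoidHom C.X w).map_zsmul n x

lemma refl0_conj (w : C.W) {γ : C.X} (hγ : γ ∈ C.roots) :
    w * refl0 h γ * w⁻¹ = refl0 h (w • γ) := by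
  refine eq_of_actX h fun x => ?_
  rw [mul_smul, mul_smul, refl0_actX h hγ, refl0_actX h (h.roots_stable w γ hγ),
    ← h.smul_coroot w γ hγ, pair_inv'' h w _ x]
  rw [smul_sub, smul_zsmul, smul_inv_smul]

end Aux
end SemiInf
namespace SemiInf
namespace Aux

variable {C : Ctx} (h : C.IsRootDatum)
include h

/-- A chosen regular dominant element of `Y`. -/
noncomputable def eta0 : C.Y := h.exists_regular_Y.choose

lemma eta0_pos {γ : C.X} (hγ : γ ∈ C.pos) : 0 < C.pair (eta0 h) γ :=
  h.exists_regular_Y.choose_spec γ hγ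

lemma root_dichotomy {γ : C.X} (hγ : γ ∈ C.roots) (hn : γ ∉ C.pos) : -γ ∈ C.pos :=
  (h.root_decomp γ hγ).resolve_left hn

lemma pos_of_hgt {γ : C.X} (hγ : γ ∈ C.roots) (hh : 0 ≤ C.pair (eta0 h) γ) : γ ∈ C.pos := by
  by_contra hn
  have h2 := eta0_pos h (root_dichotomy h hγ hn)
  rw [map_neg] at h2
  omega

lemma neg_not_pos {γ : C.X} (hγ : γ ∈ C.pos) : -γ ∉ C.pos := h.pos_neg_disjoint γ hγ

lemma not_pos_of_neg {γ : C.X} (hγ : -γ ∈ C.pos) : γ ∉ C.pos := by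
  intro hc
  exact h.pos_neg_disjoint γ hc hγ

/-- The invariant positive definite form on `X`. -/
noncomputable def Bf (x y : C.X) : ℤ :=
  haveI := h.free_X
  haveI := h.finite_X
  ∑ w : C.W, ∑ i, (Module.Free.chooseBasis ℤ C.X).repr (w • x) i *
    (Module.Free.chooseBasis ℤ C.X).repr (w • y) i

lemma Bf_symm (x y : C.X) : Bf h x y = Bf h y x := by
  unfold Bf
  congr 1
  funext w
  congr 1
  funext i
  ring

lemma Bf_add_left (x x' y : C.X) : Bf h (x + x') y = Bf h x y + Bf h x' y := by
  unfold Bf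
  rw [← Finset.sum_add_distrib]
  congr 1
  funext w
  rw [← Finset.sum_add_distrib]
  congr 1
  funext i
  rw [smul_add, map_add]
  simp [add_mul]

lemma Bf_zsmul_left (n : ℤ) (x y : C.X) : Bf h (n • x) y = n * Bf h x y := by
  unfold Bf
  rw [Finset.mul_sum]
  congr 1
  funext w
  rw [Finset.mul_sum]
  congr 1
  funext i
  rw [smul_zsmul, map_zsmul]
  simp only [Finsupp.smul_apply, smul_eq_mul]
  ring

lemma Bf_add_right (x y y' : C.X) : Bf h x (y + y') = Bf h x y + Bf h x y' := by
  rw [Bf_symm, Bf_add_left, Bf_symm h y x, Bf_symm h y' x]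

lemma Bf_zsmul_right (n : ℤ) (x y : C.X) : Bf h x (n • y) = n * Bf h x y := by
  rw [Bf_symm, Bf_zsmul_left, Bf_symm h y x]

lemma Bf_neg_left (x y : C.X) : Bf h (-x) y = -Bf h x y := by
  have := Bf_zsmul_left h (-1) x y
  simpa using this

lemma Bf_neg_right (x y : C.X) : Bf h x (-y) = -Bf h x y := by
  rw [Bf_symm, Bf_neg_left, Bf_symm h y x]

lemma Bf_sub_left (x x' y : C.X) : Bf h (x - x') y = Bf h x y - Bf h x' y := by
  rw [sub_eq_add_neg, Bf_add_left, Bf_neg_left]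
  ring

lemma Bf_sub_right (x y y' : C.X) : Bf h x (y - y') = Bf h x y - Bf h x y' := by
  rw [sub_eq_add_neg, Bf_add_right, Bf_neg_right]
  ring

lemma Bf_nonneg (x : C.X) : 0 ≤ Bf h x x := by
  unfold Bf
  apply Finset.sum_nonneg
  intro w _
  apply Finset.sum_nonneg
  intro i _
  exact mul_self_nonneg _

lemma Bf_inv (u : C.W) (x y : C.X) : Bf h (u • x) (u • y) = Bf h x y := by
  unfold Bf
  exact Fintype.sum_equiv (Equiv.mulRight u) _ _ (fun w => by simp [mul_smul])

lemma Bf_eq_zero {x : C.X} (hx : Bf h x x = 0) : x = 0 := by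
  revert hx
  unfold Bf
  intro hx
  haveI := h.free_X
  haveI := h.finite_X
  have h1 : ∀ w ∈ (Finset.univ : Finset C.W), 0 ≤ ∑ i, (Module.Free.chooseBasis ℤ C.X).repr (w • x) i * (Module.Free.chooseBasis ℤ C.X).repr (w • x) i := by
    intro w _
    apply Finset.sum_nonneg
    intro i _
    exact mul_self_nonneg _
  have h2 := (Finset.sum_eq_zero_iff_of_nonneg h1).mp hx 1 (Finset.mem_univ 1)
  rw [one_smul] at h2
  have h3 : ∀ i ∈ Finset.univ, (Module.Free.chooseBasis ℤ C.X).repr x i * (Module.Free.chooseBasis ℤ C.X).repr x i = 0 := by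
    have := (Finset.sum_eq_zero_iff_of_nonneg (fun i _ => mul_self_nonneg _)).mp h2
    exact this
  have h4 : (Module.Free.chooseBasis ℤ C.X).repr x = 0 := by
    ext i
    have := h3 i (Finset.mem_univ i)
    exact mul_self_eq_zero.mp this
  have := (Module.Free.chooseBasis ℤ C.X).repr.map_eq_zero_iff.mp h4
  exact this

lemma Bf_pos {γ : C.X} (hγ : γ ∈ C.roots) : 0 < Bf h γ γ := by
  rcases lt_or_eq_of_le (Bf_nonneg h γ) with h1 | h1
  · exact h1
  · have := Bf_eq_zero h h1.symm
    subst this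
    exact absurd hγ h.zero_not_root

/-- Key identity relating the form and the pairing. -/
lemma Bf_coroot {γ : C.X} (hγ : γ ∈ C.roots) (x : C.X) :
    2 * Bf h γ x = C.pair (C.coroot γ) x * Bf h γ γ := by
  have h1 := Bf_inv h (refl0 h γ) γ x
  rw [refl0_self h hγ, refl0_actX h hγ x, Bf_neg_left, sub_eq_add_neg, Bf_add_right,
    Bf_neg_right, Bf_zsmul_right] at h1
  linarith

end Aux
end SemiInf
namespace SemiInf
namespace Aux

variable {C : Ctx} (h : C.IsRootDatum)
include h

lemma Bf_zero_left (y : C.X) : Bf h 0 y = 0 := by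
  have := Bf_zsmul_left h 0 y y
  simpa using this

lemma smul_eq_zero' {n : ℤ} (hn : n ≠ 0) {z : C.X} (hz : n • z = 0) : z = 0 := by
  apply Bf_eq_zero h
  have h7 : Bf h (n • z) (n • z) = 0 := by
    rw [hz]
    exact Bf_zero_left h 0
  rw [Bf_zsmul_left, Bf_zsmul_right] at h7
  have hn2 : 0 < n * n := mul_self_pos.mpr hn
  nlinarith [Bf_nonneg h z]

lemma Bf_cs (x y : C.X) : Bf h x y * Bf h x y ≤ Bf h x x * Bf h y y := by
  rcases eq_or_lt_of_le (Bf_nonneg h x) with h1 | h1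
  · have hx := Bf_eq_zero h h1.symm
    subst hx
    rw [Bf_zero_left]
    simp
    exact mul_nonneg (Bf_nonneg h 0) (Bf_nonneg h y)
  · have key := Bf_nonneg h (Bf h x x • y - Bf h x y • x)
    simp only [Bf_sub_left, Bf_sub_right, Bf_zsmul_left, Bf_zsmul_right] at key
    rw [Bf_symm h y x] at key
    nlinarith

lemma two_Bf_eq {α β : C.X} (hα : α ∈ C.roots) :
    2 * Bf h α β = C.pair (C.coroot α) β * Bf h α α := Bf_coroot h hα β

lemma pq_pos {α β : C.X} (hα : α ∈ C.roots) (hβ : β ∈ C.roots)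
    (hp : 0 < C.pair (C.coroot α) β) : 0 < C.pair (C.coroot β) α := by
  have h1 := two_Bf_eq h hα (β := β)
  have h2 := two_Bf_eq h hβ (β := α)
  have hBa := Bf_pos h hα
  have hBb := Bf_pos h hβ
  rw [Bf_symm h β α] at h2
  nlinarith [mul_pos hp hBa]

lemma pq_le_four {α β : C.X} (hα : α ∈ C.roots) (hβ : β ∈ C.roots) :
    C.pair (C.coroot α) β * C.pair (C.coroot β) α ≤ 4 := by
  have h1 := two_Bf_eq h hα (β := β)
  have h2 := two_Bf_eq h hβ (β := α)
  have hBa := Bf_pos h hα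
  have hBb := Bf_pos h hβ
  have hcs := Bf_cs h α β
  rw [Bf_symm h β α] at h2
  have e : 4 * (Bf h α β * Bf h α β) =
      (C.pair (C.coroot α) β * C.pair (C.coroot β) α) * (Bf h α α * Bf h β β) := by
    linear_combination (2 * Bf h α β) * h2 + (C.pair (C.coroot β) α * Bf h β β) * h1
  nlinarith [mul_pos hBa hBb]

lemma eq_of_pq_four {α β : C.X} (hα : α ∈ C.roots) (hβ : β ∈ C.roots)
    (hp : 0 < C.pair (C.coroot α) β)
    (h4 : C.pair (C.coroot α) β * C.pair (C.coroot β) α = 4) : α = β := by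
  have hq : 0 < C.pair (C.coroot β) α := pq_pos h hα hβ hp
  have h1 := two_Bf_eq h hα (β := β)
  have h2 := two_Bf_eq h hβ (β := α)
  have hBa := Bf_pos h hα
  have hBb := Bf_pos h hβ
  rw [Bf_symm h β α] at h2
  have heq4 : 4 * (Bf h α β * Bf h α β) = 4 * (Bf h α α * Bf h β β) := by
    linear_combination (2 * Bf h α β) * h2 + (C.pair (C.coroot β) α * Bf h β β) * h1
      + (Bf h α α * Bf h β β) * h4
  have heq : Bf h α β * Bf h α β = Bf h α α * Bf h β β := by omega
  have hz : Bf h β β • α - Bf h α β • β = 0 := by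
    apply Bf_eq_zero h
    simp only [Bf_sub_left, Bf_sub_right, Bf_zsmul_left, Bf_zsmul_right]
    rw [Bf_symm h β α]
    linear_combination (-(Bf h β β)) * heq
  have hz' : Bf h β β • α = Bf h α β • β := by rwa [sub_eq_zero] at hz
  obtain ⟨p, hpdef⟩ : ∃ t, C.pair (C.coroot α) β = t := ⟨_, rfl⟩
  obtain ⟨q, hqdef⟩ : ∃ t, C.pair (C.coroot β) α = t := ⟨_, rfl⟩
  obtain ⟨a, hadef⟩ : ∃ t, Bf h α α = t := ⟨_, rfl⟩
  obtain ⟨b, hbdef⟩ : ∃ t, Bf h α β = t := ⟨_, rfl⟩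
  obtain ⟨c, hcdef⟩ : ∃ t, Bf h β β = t := ⟨_, rfl⟩
  rw [hpdef, hqdef] at h4
  rw [hpdef, hadef, hbdef] at h1
  rw [hqdef, hbdef, hcdef] at h2
  rw [hadef] at hBa
  rw [hcdef] at hBb
  rw [hpdef] at hp
  rw [hqdef] at hq
  rw [hbdef, hcdef] at hz'
  have hple : p ≤ 4 := by nlinarith
  interval_cases p
  · -- p = 1, q = 4, α = 2 β
    have hq4 : q = 4 := by omega
    rw [hq4] at h2
    exfalso
    have hb : b = 2 * c := by omega
    have hz2 : c • (α - (2:ℤ) • β) = 0 := by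
      rw [smul_sub, hz', hb, smul_smul, mul_comm c 2, sub_self]
    have := smul_eq_zero' h (by omega : c ≠ 0) hz2
    rw [sub_eq_zero] at this
    have := h.reduced β hβ 2 (this ▸ hα)
    omega
  · -- p = 2, q = 2
    have hq2 : q = 2 := by omega
    rw [hq2] at h2
    have hbc : b = c := by omega
    have hz2 : c • (α - β) = 0 := by
      rw [smul_sub, hz', hbc, sub_self]
    have := smul_eq_zero' h (by omega : c ≠ 0) hz2
    rwa [sub_eq_zero] at this
  · omega
  · -- p = 4, q = 1, β = 2 α
    have hq1 : q = 1 := by omega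
    rw [hq1] at h2
    exfalso
    have hb : b = 2 * a := by omega
    have hc : c = 4 * a := by omega
    have hz2 : (2 * a) • ((2:ℤ) • α - β) = 0 := by
      rw [smul_sub, smul_smul, show 2 * a * 2 = c by omega, hz', hb, sub_self]
    have := smul_eq_zero' h (by omega : 2 * a ≠ 0) hz2
    rw [sub_eq_zero] at this
    have := h.reduced α hα 2 (this.symm ▸ hβ)
    omega

lemma root_sub_mem {α β : C.X} (hα : α ∈ C.roots) (hβ : β ∈ C.roots) (hne : β ≠ α)
    (hp : 0 < C.pair (C.coroot α) β) : β - α ∈ C.roots := by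
  have hq := pq_pos h hα hβ hp
  have h4 := pq_le_four h hα hβ
  have hne4 : C.pair (C.coroot α) β * C.pair (C.coroot β) α ≠ 4 := by
    intro hc
    exact hne (eq_of_pq_four h hα hβ hp hc).symm
  have h3 : C.pair (C.coroot α) β = 1 ∨ C.pair (C.coroot β) α = 1 := by
    by_contra hc
    push_neg at hc
    obtain ⟨hc1, hc2⟩ := hc
    have hg1 : 2 ≤ C.pair (C.coroot α) β := by omega
    have hg2 : 2 ≤ C.pair (C.coroot β) α := by omega
    have h5 : 2 * 2 ≤ C.pair (C.coroot α) β * C.pair (C.coroot β) α :=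
      mul_le_mul hg1 hg2 (by omega) (by omega)
    omega
  rcases h3 with h3 | h3
  · have := h.roots_stable (refl0 h α) β hβ
    rwa [refl0_actX h hα, h3, one_smul] at this
  · have := h.roots_stable (refl0 h β) α hα
    rw [refl0_actX h hβ, h3, one_smul] at this
    have := neg_mem_roots h this
    rwa [neg_sub] at this

end Aux
end SemiInf
namespace SemiInf
namespace Aux

variable {C : Ctx} (h : C.IsRootDatum)
include h

omit h in
lemma mem_simple {α : C.X} :
    α ∈ C.simpleRoots ↔ α ∈ C.pos ∧ ¬ ∃ β ∈ C.pos, ∃ γ ∈ C.pos, α = β + γ := by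
  simp [Ctx.simpleRoots]

omit h in
lemma simple_pos {α : C.X} (hα : α ∈ C.simpleRoots) : α ∈ C.pos := (mem_simple.mp hα).1

omit h in
lemma simple_not_sum {α β γ : C.X} (hα : α ∈ C.simpleRoots) (hβ : β ∈ C.pos)
    (hγ : γ ∈ C.pos) (he : α = β + γ) : False :=
  (mem_simple.mp hα).2 ⟨β, hβ, γ, hγ, he⟩

lemma hgt_pos {γ : C.X} (hγ : γ ∈ C.pos) : 0 < C.pair (eta0 h) γ := eta0_pos h hγ

/-- Decomposition of a positive root as a nonempty sum of simple roots. -/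
lemma decomp_aux : ∀ n : ℕ, ∀ β ∈ C.pos, C.pair (eta0 h) β ≤ n →
    ∃ m : Multiset C.X, (∀ γ ∈ m, γ ∈ C.simpleRoots) ∧ m.sum = β ∧ m ≠ 0 := by
  intro n
  induction n with
  | zero =>
    intro β hβ hle
    have := hgt_pos h hβ
    omega
  | succ n ih =>
    intro β hβ hle
    by_cases hs : β ∈ C.simpleRoots
    · exact ⟨{β}, by simpa using hs, by simp, by simp⟩
    · have : ∃ γ ∈ C.pos, ∃ δ ∈ C.pos, β = γ + δ := by
        by_contra hc
        exact hs (mem_simple.mpr ⟨hβ, hc⟩)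
      obtain ⟨γ, hγ, δ, hδ, he⟩ := this
      have hgγ := hgt_pos h hγ
      have hgδ := hgt_pos h hδ
      have hsum : C.pair (eta0 h) β = C.pair (eta0 h) γ + C.pair (eta0 h) δ := by
        rw [he, map_add]
      obtain ⟨m1, hm1, hs1, hne1⟩ := ih γ hγ (by omega)
      obtain ⟨m2, hm2, hs2, hne2⟩ := ih δ hδ (by omega)
      refine ⟨m1 + m2, ?_, ?_, ?_⟩
      · intro x hx
        rcases Multiset.mem_add.mp hx with hx | hx
        · exact hm1 x hx
        · exact hm2 x hx
      · rw [Multiset.sum_add, hs1, hs2, he]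
      · intro hc
        apply hne1
        have hcard := congrArg Multiset.card hc
        rw [Multiset.card_add] at hcard
        simp only [Multiset.card_zero] at hcard
        exact Multiset.card_eq_zero.mp (by omega)

lemma decomp {β : C.X} (hβ : β ∈ C.pos) :
    ∃ m : Multiset C.X, (∀ γ ∈ m, γ ∈ C.simpleRoots) ∧ m.sum = β ∧ m ≠ 0 :=
  decomp_aux h (C.pair (eta0 h) β).toNat β hβ (by
    have := hgt_pos h hβ
    omega)

lemma Bf_multiset_sum (x : C.X) (m : Multiset C.X) :
    Bf h x m.sum = (m.map (fun γ => Bf h x γ)).sum := by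
  induction m using Multiset.induction with
  | empty =>
    simp only [Multiset.sum_zero, Multiset.map_zero]
    rw [Bf_symm]
    exact Bf_zero_left h x
  | cons a s ih =>
    rw [Multiset.sum_cons, Bf_add_right, Multiset.map_cons, Multiset.sum_cons, ih]

omit h in
lemma multiset_sum_nonpos (m : Multiset ℤ) (hm : ∀ x ∈ m, x ≤ 0) : m.sum ≤ 0 := by
  induction m using Multiset.induction with
  | empty => simp
  | cons a s ih =>
    rw [Multiset.sum_cons]
    have h1 := hm a (Multiset.mem_cons_self a s)
    have h2 := ih (fun x hx => hm x (Multiset.mem_cons_of_mem hx))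
    omega

lemma simple_pair_pos {β : C.X} (hβ : β ∈ C.pos) :
    ∃ α ∈ C.simpleRoots, 0 < C.pair (C.coroot α) β := by
  obtain ⟨m, hm, hsum, hne⟩ := decomp h hβ
  have hββ := Bf_pos h (h.pos_subset hβ)
  have hadd : Bf h β (Multiset.sum m) = (m.map (fun γ => Bf h β γ)).sum :=
    Bf_multiset_sum h β m
  have hex : ∃ γ ∈ m, 0 < Bf h β γ := by
    by_contra hc
    push_neg at hc
    have hle : (m.map (fun γ => Bf h β γ)).sum ≤ 0 := by
      apply multiset_sum_nonpos
      intro x hx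
      obtain ⟨γ, hγ, rfl⟩ := Multiset.mem_map.mp hx
      exact hc γ hγ
    rw [← hadd, hsum] at hle
    omega
  obtain ⟨γ, hγm, hγpos⟩ := hex
  have hγs := hm γ hγm
  have hγr : γ ∈ C.roots := h.pos_subset (simple_pos hγs)
  have hid := two_Bf_eq h hγr (β := β)
  have hγγ := Bf_pos h hγr
  refine ⟨γ, hγs, ?_⟩
  rw [Bf_symm h β γ] at hγpos
  nlinarith

/-- A simple reflection maps every other positive root to a positive root. -/
lemma simple_refl_pos {α β : C.X} (hα : α ∈ C.simpleRoots) (hβ : β ∈ C.pos) (hne : β ≠ α) :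
    refl0 h α • β ∈ C.pos := by
  have hαp := simple_pos hα
  have hαr : α ∈ C.roots := h.pos_subset hαp
  have hβr : β ∈ C.roots := h.pos_subset hβ
  have hroot : refl0 h α • β ∈ C.roots := h.roots_stable _ β hβr
  rw [refl0_actX h hαr] at hroot ⊢
  set p := C.pair (C.coroot α) β with hpdef
  rcases le_or_gt p 0 with hp | hp
  · -- height increases
    apply pos_of_hgt h hroot
    rw [map_sub, pair_zsmul]
    have h1 := hgt_pos h hβ
    have h2 := hgt_pos h hαp
    nlinarith [mul_nonneg (neg_nonneg.mpr hp) h2.le]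
  · -- p ∈ {1, 2, 3}
    by_contra hc
    have hneg : p • α - β ∈ C.pos := by
      have := root_dichotomy h hroot hc
      rwa [neg_sub] at this
    have hq : 0 < C.pair (C.coroot β) α := pq_pos h hαr hβr hp
    have h4 : p * C.pair (C.coroot β) α ≤ 4 := pq_le_four h hαr hβr
    have hne4 : p * C.pair (C.coroot β) α ≠ 4 := by
      intro he
      exact hne (eq_of_pq_four h hαr hβr hp he).symm
    have hβ2α : β ≠ (2:ℤ) • α := by
      intro he
      have := h.reduced α hαr 2 (he ▸ hβr)
      omega
    have hp3 : p ≤ 3 := by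
      have h6 := le_mul_of_one_le_right hp.le hq
      have h7 := lt_of_le_of_ne h4 hne4
      linarith
    -- β - α is a root (needed for p ≥ 2 chains); for p = 1 it is s_α β itself
    interval_cases p
    · -- p = 1 : α = β + (α - β)
      have : α = β + ((1:ℤ) • α - β) := by module
      exact simple_not_sum hα hβ hneg this
    · -- p = 2
      have hsub : β - α ∈ C.roots := root_sub_mem h hαr hβr hne (by omega)
      rcases h.root_decomp _ hsub with hc1 | hc1
      · -- β - α positive : α = (β - α) + (2α - β)
        have : α = (β - α) + ((2:ℤ) • α - β) := by module
        exact simple_not_sum hα hc1 hneg this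
      · -- α - β positive : α = β + (α - β)
        rw [neg_sub] at hc1
        have : α = β + (α - β) := by module
        exact simple_not_sum hα hβ hc1 this
    · -- p = 3
      have hsub : β - α ∈ C.roots := root_sub_mem h hαr hβr hne (by omega)
      rcases h.root_decomp _ hsub with hc1 | hc1
      · -- β - α positive
        have hne2 : β - α ≠ α := by
          intro he
          apply hβ2α
          have hb : β = (β - α) + α := by module
          rw [he] at hb
          rw [hb]
          module
        have hpair : 0 < C.pair (C.coroot α) (β - α) := by
          rw [map_sub, h.coroot_self α hαr]
          omega
        have hsub2 : (β - α) - α ∈ C.roots := root_sub_mem h hαr hsub hne2 hpair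
        rcases h.root_decomp _ hsub2 with hc2 | hc2
        · -- β - 2α positive : α = (β - 2α) + (3α - β)
          have : α = (β - α - α) + ((3:ℤ) • α - β) := by module
          exact simple_not_sum hα hc2 hneg this
        · -- 2α - β positive : α = (β - α) + (2α - β)
          rw [neg_sub] at hc2
          have : α = (β - α) + (α - (β - α)) := by module
          exact simple_not_sum hα hc1 hc2 this
      · -- α - β positive : α = β + (α - β)
        rw [neg_sub] at hc1
        have : α = β + (α - β) := by module
        exact simple_not_sum hα hβ hc1 this

end Aux
end SemiInf
namespace SemiInf
namespace Aux

variable {C : Ctx} (h : C.IsRootDatum)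
include h

/-- Product of the reflections attached to a list of roots. -/
noncomputable def wordProd (l : List C.X) : C.W := (l.map (refl0 h)).prod

lemma wordProd_nil : wordProd h ([] : List C.X) = 1 := rfl

lemma wordProd_cons (α : C.X) (t : List C.X) :
    wordProd h (α :: t) = refl0 h α * wordProd h t := by
  simp [wordProd]

lemma wordProd_append (t₁ t₂ : List C.X) :
    wordProd h (t₁ ++ t₂) = wordProd h t₁ * wordProd h t₂ := by
  simp [wordProd]

lemma wordProd_reverse (l : List C.X) (hl : ∀ γ ∈ l, γ ∈ C.roots) :
    wordProd h l.reverse = (wordProd h l)⁻¹ := by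
  induction l with
  | nil => simp [wordProd]
  | cons α t ih =>
    rw [List.reverse_cons, wordProd_append, ih (fun γ hγ => hl γ (by simp [hγ])),
      wordProd_cons h α [], wordProd_nil, mul_one, wordProd_cons h α t, mul_inv_rev,
      refl0_inv h (hl α (by simp))]

/-- The subgroup of elements expressible as words in simple reflections. -/
noncomputable def simpleWords : Subgroup C.W where
  carrier := {w | ∃ l : List C.X, (∀ γ ∈ l, γ ∈ C.simpleRoots) ∧ wordProd h l = w}
  one_mem' := ⟨[], by simp, rfl⟩
  mul_mem' := by
    rintro a b ⟨l₁, hl₁, rfl⟩ ⟨l₂, hl₂, rfl⟩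
    refine ⟨l₁ ++ l₂, ?_, by rw [wordProd_append]⟩
    intro γ hγ
    rcases List.mem_append.mp hγ with hγ | hγ
    · exact hl₁ γ hγ
    · exact hl₂ γ hγ
  inv_mem' := by
    rintro a ⟨l, hl, rfl⟩
    refine ⟨l.reverse, fun γ hγ => hl γ (List.mem_reverse.mp hγ), ?_⟩
    exact wordProd_reverse h l (fun γ hγ => h.pos_subset (simple_pos (hl γ hγ)))

lemma refl0_mem_aux : ∀ n : ℕ, ∀ γ ∈ C.pos, C.pair (eta0 h) γ ≤ n →
    refl0 h γ ∈ simpleWords h := by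
  intro n
  induction n with
  | zero =>
    intro γ hγ hle
    have := hgt_pos h hγ
    omega
  | succ n ih =>
    intro γ hγ hle
    by_cases hs : γ ∈ C.simpleRoots
    · exact ⟨[γ], by simpa using hs, by rw [wordProd_cons, wordProd_nil, mul_one]⟩
    · obtain ⟨α, hα, hp⟩ := simple_pair_pos h hγ
      have hαp := simple_pos hα
      have hαr : α ∈ C.roots := h.pos_subset hαp
      have hγr : γ ∈ C.roots := h.pos_subset hγ
      have hne : γ ≠ α := by
        intro he
        exact hs (he ▸ hα)
      have hγ' : refl0 h α • γ ∈ C.pos := simple_refl_pos h hα hγ hne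
      have hγ'r : refl0 h α • γ ∈ C.roots := h.pos_subset hγ'
      have hhgt : C.pair (eta0 h) (refl0 h α • γ) ≤ n := by
        rw [refl0_actX h hαr, map_sub, pair_zsmul]
        have h1 := hgt_pos h hαp
        have h2 := hgt_pos h hγ'
        push_cast at hle ⊢
        nlinarith [mul_pos hp h1]
      have hmem' := ih _ hγ' hhgt
      have hαmem : refl0 h α ∈ simpleWords h :=
        ⟨[α], by simpa using hα, by rw [wordProd_cons, wordProd_nil, mul_one]⟩
      have hconj := refl0_conj h (refl0 h α) hγ'r
      rw [show refl0 h α • refl0 h α • γ = γ by rw [← mul_smul, refl0_sq h hαr, one_smul],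
        refl0_inv h hαr] at hconj
      rw [← hconj]
      exact mul_mem (mul_mem hαmem hmem') hαmem

lemma refl0_mem {γ : C.X} (hγ : γ ∈ C.roots) : refl0 h γ ∈ simpleWords h := by
  rcases h.root_decomp γ hγ with hp | hp
  · exact refl0_mem_aux h (C.pair (eta0 h) γ).toNat γ hp (by omega)
  · have hmem := refl0_mem_aux h (C.pair (eta0 h) (-γ)).toNat (-γ) hp (by omega)
    have := refl0_neg h hγ
    rwa [this] at hmem

/-- Every element of the Weyl group is a word in simple reflections. -/
lemma exists_word (w : C.W) :
    ∃ l : List C.X, (∀ γ ∈ l, γ ∈ C.simpleRoots) ∧ wordProd h l = w := by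
  have hgen := h.weyl_gen w
  have hle : Subgroup.closure {s : C.W | ∃ α ∈ C.roots,
      (∀ x : C.X, s • x = x - C.pair (C.coroot α) x • α) ∧
      (∀ y : C.Y, s • y = y - C.pair y α • C.coroot α)} ≤ simpleWords h := by
    rw [Subgroup.closure_le]
    rintro s ⟨α, hα, hsx, _⟩
    have : s = refl0 h α := by
      refine eq_of_actX h fun x => ?_
      rw [hsx x, refl0_actX h hα]
    rw [this]
    exact refl0_mem h hα
  exact hle hgen

end Aux
end SemiInf
namespace SemiInf
namespace Aux

variable {C : Ctx} (h : C.IsRootDatum)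

/-- The positive representative of a root. -/
noncomputable def epos (γ : C.X) : C.X := if γ ∈ C.pos then γ else -γ

include h

lemma epos_mem {γ : C.X} (hγ : γ ∈ C.roots) : epos γ ∈ C.pos := by
  by_cases hp : γ ∈ C.pos
  · simpa [epos, hp] using hp
  · simp only [epos, hp, if_false]
    exact root_dichotomy h hγ hp

omit h in
lemma epos_eq_cases {x y : C.X} (he : epos x = epos y) : x = y ∨ x = -y := by
  by_cases hx : x ∈ C.pos <;> by_cases hy : y ∈ C.pos <;>
      simp only [epos, hx, hy, if_true, if_false] at he
  · exact Or.inl he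
  · exact Or.inr he
  · rw [neg_eq_iff_eq_neg] at he
    exact Or.inr he
  · rw [neg_inj] at he
    exact Or.inl he

/-- The list of candidate inversions attached to a word. -/
noncomputable def mlist : List C.X → List C.X
  | [] => []
  | α :: t => epos ((wordProd h t)⁻¹ • α) :: mlist t

lemma mlist_nil : mlist h ([] : List C.X) = [] := rfl

lemma mlist_cons (α : C.X) (t : List C.X) :
    mlist h (α :: t) = epos ((wordProd h t)⁻¹ • α) :: mlist h t := rfl

lemma parity : ∀ l : List C.X, (∀ γ ∈ l, γ ∈ C.simpleRoots) → ∀ β ∈ C.pos,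
    (-(wordProd h l • β) ∈ C.pos ↔ Odd ((mlist h l).count β)) := by
  intro l
  induction l with
  | nil =>
    intro _ β hβ
    rw [wordProd_nil, one_smul, mlist_nil]
    simp only [List.count_nil]
    constructor
    · intro hc
      exact absurd hc (neg_not_pos h hβ)
    · intro hc
      exact absurd hc (by simp [Nat.odd_iff])
  | cons α t ih =>
    intro hl β hβ
    have hαs : α ∈ C.simpleRoots := hl α (by simp)
    have hαp := simple_pos hαs
    have hαr : α ∈ C.roots := h.pos_subset hαp
    have hβr : β ∈ C.roots := h.pos_subset hβ
    have ih' := ih (fun γ hγ => hl γ (by simp [hγ])) β hβ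
    set v := wordProd h t with hv
    set m₁ := epos ((v)⁻¹ • α) with hm₁
    have hγr : v • β ∈ C.roots := h.roots_stable v β hβr
    rw [wordProd_cons, mul_smul, mlist_cons, ← hv, ← hm₁, List.count_cons]
    simp only [beq_iff_eq]
    rw [Nat.odd_iff] at ih' ⊢
    by_cases hγp : v • β ∈ C.pos
    · by_cases hγα : v • β = α
      · -- case 1 : LHS true, β = m₁, previous false
        have hLHS : -(refl0 h α • (v • β)) ∈ C.pos := by
          rw [hγα, refl0_self h hαr, neg_neg]
          exact hαp
        have heq : β = m₁ := by
          rw [hm₁, ← hγα, inv_smul_smul]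
          simp [epos, hβ]
        have hprev : ¬ (-(v • β) ∈ C.pos) := by
          rw [hγα]
          exact neg_not_pos h hαp
        rw [if_pos heq.symm]
        rw [iff_true_intro hLHS]
        simp only [true_iff]
        have hc : ¬ (List.count β (mlist h t) % 2 = 1) := fun hh => hprev (ih'.mpr hh)
        omega
      · -- case 2 : LHS false, β ≠ m₁, previous false
        have hLHS : ¬ (-(refl0 h α • (v • β)) ∈ C.pos) :=
          neg_not_pos h (simple_refl_pos h hαs hγp hγα)
        have hprev : ¬ (-(v • β) ∈ C.pos) := neg_not_pos h hγp
        have hne : ¬ (β = m₁) := by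
          intro he
          have hh : epos (C := C) β = epos (v⁻¹ • α) := by
            have h2 : epos (C := C) β = β := by simp [epos, hβ]
            rw [h2, he, hm₁]
          rcases epos_eq_cases hh with h1 | h1
          · apply hγα
            rw [h1, smul_inv_smul]
          · have : v • β = -α := by
              rw [h1]
              rw [smul_neg, smul_inv_smul]
            rw [this] at hγp
            exact neg_not_pos h hαp hγp
        rw [if_neg (fun hc => hne hc.symm)]
        rw [iff_false_intro hLHS]
        simp only [false_iff]
        have hc : ¬ (List.count β (mlist h t) % 2 = 1) := fun hh => hprev (ih'.mpr hh)
        omega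
    · -- v • β negative
      have hδp : -(v • β) ∈ C.pos := root_dichotomy h hγr hγp
      have hδr : -(v • β) ∈ C.roots := h.pos_subset hδp
      by_cases hδα : -(v • β) = α
      · -- case 3 : LHS false, β = m₁, previous true
        have hLHS : ¬ (-(refl0 h α • (v • β)) ∈ C.pos) := by
          have : v • β = -α := by rw [← hδα]; simp
          rw [this, smul_neg, refl0_self h hαr, neg_neg]
          exact neg_not_pos h hαp
        have heq : β = m₁ := by
          have : v⁻¹ • α = -β := by
            rw [← hδα, smul_neg, inv_smul_smul]
          rw [hm₁, this]
          simp [epos, neg_not_pos h hβ]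
        rw [if_pos heq.symm]
        rw [iff_false_intro hLHS]
        simp only [false_iff]
        have hc : List.count β (mlist h t) % 2 = 1 := ih'.mp hδp
        omega
      · -- case 4 : LHS true, β ≠ m₁, previous true
        have hLHS : -(refl0 h α • (v • β)) ∈ C.pos := by
          rw [← smul_neg]
          exact simple_refl_pos h hαs hδp hδα
        have hne : ¬ (β = m₁) := by
          intro he
          have hh : epos (C := C) β = epos (v⁻¹ • α) := by
            have h2 : epos (C := C) β = β := by simp [epos, hβ]
            rw [h2, he, hm₁]
          rcases epos_eq_cases hh with h1 | h1
          · have : v • β = α := by rw [h1, smul_inv_smul]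
            rw [this] at hγp
            exact hγp hαp
          · apply hδα
            rw [h1]
            rw [smul_neg, smul_inv_smul, neg_neg]
        rw [if_neg (fun hc => hne hc.symm)]
        rw [iff_true_intro hLHS]
        simp only [true_iff]
        have hc : List.count β (mlist h t) % 2 = 1 := ih'.mp hδp
        omega

lemma mem_mlist {x : C.X} : ∀ t : List C.X, x ∈ mlist h t →
    ∃ t₁ γ t₂, t = t₁ ++ γ :: t₂ ∧ x = epos ((wordProd h t₂)⁻¹ • γ) := by
  intro t
  induction t with
  | nil => simp [mlist_nil]
  | cons α t ih =>
    intro hx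
    rw [mlist_cons] at hx
    rcases List.mem_cons.mp hx with hx | hx
    · exact ⟨[], α, t, by simp, hx⟩
    · obtain ⟨t₁, γ, t₂, he, he2⟩ := ih hx
      exact ⟨α :: t₁, γ, t₂, by simp [he], he2⟩

lemma deletion : ∀ n : ℕ, ∀ l : List C.X, l.length ≤ n → (∀ γ ∈ l, γ ∈ C.simpleRoots) →
    (∀ β ∈ C.pos, -(wordProd h l • β) ∉ C.pos) → wordProd h l = 1 := by
  intro n
  induction n with
  | zero =>
    intro l hlen _ _
    have hnil : l = [] := List.length_eq_zero_iff.mp (by omega)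
    subst hnil
    rfl
  | succ n ihn =>
    intro l hlen hl hinv
    match l with
    | [] => rfl
    | α :: t =>
      have hαs : α ∈ C.simpleRoots := hl α (by simp)
      have hαr : α ∈ C.roots := h.pos_subset (simple_pos hαs)
      set v := wordProd h t with hv
      have hvαr : v⁻¹ • α ∈ C.roots := h.roots_stable v⁻¹ α hαr
      set m₁ := epos ((v)⁻¹ • α) with hm₁
      have hm₁p : m₁ ∈ C.pos := epos_mem h hvαr
      have hcount := (parity h (α :: t) hl m₁ hm₁p).not.mp (hinv m₁ hm₁p)
      simp only [mlist_cons, ← hv, ← hm₁, List.count_cons, beq_self_eq_true, if_pos, Nat.odd_iff] at hcount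
      have hmem : m₁ ∈ mlist h t := by
        rcases Nat.eq_zero_or_pos ((mlist h t).count m₁) with h0 | h0
        · omega
        · exact List.count_pos_iff.mp h0
      obtain ⟨t₁, γ, t₂, hte, hee⟩ := mem_mlist h t hmem
      have hγs : γ ∈ C.simpleRoots := hl γ (by simp [hte])
      have hγr : γ ∈ C.roots := h.pos_subset (simple_pos hγs)
      set u₁ := wordProd h t₁ with hu₁
      set v₂ := wordProd h t₂ with hv₂
      have hvdec : v = u₁ * refl0 h γ * v₂ := by
        rw [hv, hte, wordProd_append, wordProd_cons, ← hu₁, ← hv₂, mul_assoc]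
      have hu₁γr : u₁ • γ ∈ C.roots := h.roots_stable u₁ γ hγr
      -- α = ±(u₁ • γ)
      have hrefl : refl0 h α = refl0 h (u₁ • γ) := by
        have hcompute : v • (v₂⁻¹ • γ) = -(u₁ • γ) := by
          rw [hvdec, mul_smul, mul_smul, smul_inv_smul, refl0_self h hγr, smul_neg]
        rcases epos_eq_cases (hm₁.symm.trans hee) with h1 | h1
        · -- v⁻¹ • α = v₂⁻¹ • γ
          have : α = -(u₁ • γ) := by
            rw [← hcompute, ← h1, smul_inv_smul]
          rw [this, refl0_neg h hu₁γr]
        · -- v⁻¹ • α = -(v₂⁻¹ • γ)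
          have : α = u₁ • γ := by
            have := congrArg (fun z => v • z) h1
            simp only [smul_inv_smul, smul_neg] at this
            rw [this, hcompute, neg_neg]
          rw [this]
      have hconj := refl0_conj h u₁ hγr
      have hw : wordProd h (α :: t) = wordProd h (t₁ ++ t₂) := by
        rw [wordProd_cons, ← hv, hvdec, hrefl, ← hconj, wordProd_append, ← hu₁, ← hv₂]
        rw [show u₁ * refl0 h γ * u₁⁻¹ * (u₁ * refl0 h γ * v₂) =
          u₁ * (refl0 h γ * refl0 h γ) * v₂ by group, refl0_sq h hγr, mul_one]
      rw [hw]
      apply ihn (t₁ ++ t₂)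
      · have h1 : t.length = t₁.length + (t₂.length + 1) := by
          rw [hte]
          simp
        simp only [List.length_cons] at hlen
        simp only [List.length_append]
        omega
      · intro x hx
        rcases List.mem_append.mp hx with hx | hx
        · exact hl x (by simp [hte, hx])
        · exact hl x (by simp [hte, hx])
      · intro β hβ
        rw [← hw]
        exact hinv β hβ

/-- An element with no inversions is the identity. -/
lemma no_inv_eq_one (w : C.W) (hw : ∀ β ∈ C.pos, -(w • β) ∉ C.pos) : w = 1 := by
  obtain ⟨l, hl, he⟩ := exists_word h w
  rw [← he]
  exact deletion h l.length l le_rfl hl (by rwa [he])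

end Aux
end SemiInf
namespace SemiInf
namespace Aux

variable {C : Ctx} (h : C.IsRootDatum)
include h

/-- The inversion set of `w`. -/
noncomputable def invSet (w : C.W) : Finset C.X := C.pos.filter fun β => -(w • β) ∈ C.pos

omit h in
lemma multiset_sum_nonneg (m : Multiset ℤ) (hm : ∀ x ∈ m, 0 ≤ x) : 0 ≤ m.sum := by
  induction m using Multiset.induction with
  | empty => simp
  | cons a s ih =>
    rw [Multiset.sum_cons]
    have h1 := hm a (Multiset.mem_cons_self a s)
    have h2 := ih (fun x hx => hm x (Multiset.mem_cons_of_mem hx))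
    omega

lemma exists_simple_inv (w : C.W) (hw : (invSet w).Nonempty) :
    ∃ α ∈ C.simpleRoots, -(w • α) ∈ C.pos := by
  obtain ⟨β, hβ⟩ := hw
  rw [invSet, Finset.mem_filter] at hβ
  obtain ⟨hβp, hβinv⟩ := hβ
  obtain ⟨m, hm, hsum, hne⟩ := decomp h hβp
  have hneg : C.pair (eta0 h) (w • β) < 0 := by
    have := hgt_pos h hβinv
    rw [map_neg] at this
    omega
  have hsmul : w • β = (m.map (fun γ => w • γ)).sum := by
    rw [← hsum]
    exact map_multiset_sum (DistribMulAction.toAddMonoidHom C.X w) m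
  have hex : ∃ γ ∈ m, C.pair (eta0 h) (w • γ) < 0 := by
    by_contra hc
    push_neg at hc
    have h0 : 0 ≤ C.pair (eta0 h) (w • β) := by
      rw [hsmul, map_multiset_sum]
      rw [Multiset.map_map]
      apply multiset_sum_nonneg
      intro x hx
      obtain ⟨γ, hγ, rfl⟩ := Multiset.mem_map.mp hx
      exact hc γ hγ
    omega
  obtain ⟨γ, hγm, hγneg⟩ := hex
  have hγs := hm γ hγm
  refine ⟨γ, hγs, ?_⟩
  have hγr : w • γ ∈ C.roots := h.roots_stable w γ (h.pos_subset (simple_pos hγs))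
  apply root_dichotomy h hγr
  intro hc
  have := hgt_pos h hc
  omega

lemma invSet_card_lt {w : C.W} {α : C.X} (hα : α ∈ C.simpleRoots) (hinv : -(w • α) ∈ C.pos) :
    (invSet (w * refl0 h α)).card < (invSet w).card := by
  have hαp := simple_pos hα
  have hαr : α ∈ C.roots := h.pos_subset hαp
  have hmem : α ∈ invSet w := Finset.mem_filter.mpr ⟨hαp, hinv⟩
  have hsub : (invSet (w * refl0 h α)).image (fun β => refl0 h α • β) ⊆
      (invSet w).erase α := by
    intro x hx
    obtain ⟨β, hβ, rfl⟩ := Finset.mem_image.mp hx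
    rw [invSet, Finset.mem_filter] at hβ
    obtain ⟨hβp, hβi⟩ := hβ
    rw [mul_smul] at hβi
    have hβα : β ≠ α := by
      intro he
      subst he
      rw [refl0_self h hαr, smul_neg, neg_neg] at hβi
      exact neg_not_pos h hβi hinv
    have hsβ : refl0 h α • β ∈ C.pos := simple_refl_pos h hα hβp hβα
    apply Finset.mem_erase.mpr
    refine ⟨?_, Finset.mem_filter.mpr ⟨hsβ, hβi⟩⟩
    intro he
    have hβeq : β = -α := by
      have := congrArg (fun z => refl0 h α • z) he
      rw [← mul_smul, refl0_sq h hαr, one_smul, refl0_self h hαr] at this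
      exact this
    rw [hβeq] at hβp
    exact neg_not_pos h hαp hβp
  calc (invSet (w * refl0 h α)).card
      = ((invSet (w * refl0 h α)).image (fun β => refl0 h α • β)).card :=
        (Finset.card_image_of_injective _ (MulAction.injective (refl0 h α))).symm
    _ ≤ ((invSet w).erase α).card := Finset.card_le_card hsub
    _ < (invSet w).card := Finset.card_erase_lt_of_mem hmem

/-- A chosen regular dominant element of `X`. -/
noncomputable def xi : C.X := h.exists_regular_X.choose

lemma xi_pos {α : C.X} (hα : α ∈ C.pos) : 0 < C.pair (C.coroot α) (xi h) :=
  h.exists_regular_X.choose_spec α hα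

lemma orbit_aux : ∀ n : ℕ, ∀ w : C.W, (invSet w).card ≤ n →
    (xi h - w • xi h ∈ AddSubmonoid.closure (↑C.pos : Set C.X)) ∧
    (w ≠ 1 → 0 < C.pair (eta0 h) (xi h - w • xi h)) := by
  intro n
  induction n with
  | zero =>
    intro w hcard
    have hempty : ∀ β ∈ C.pos, -(w • β) ∉ C.pos := by
      intro β hβ hc
      have hm : β ∈ invSet w := Finset.mem_filter.mpr ⟨hβ, hc⟩
      have := Finset.card_pos.mpr ⟨β, hm⟩
      omega
    have hW : w = 1 := no_inv_eq_one h w hempty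
    subst hW
    rw [one_smul, sub_self]
    exact ⟨zero_mem _, fun hc => absurd rfl hc⟩
  | succ n ih =>
    intro w hcard
    by_cases hne : (invSet w).Nonempty
    · obtain ⟨α, hαs, hinvα⟩ := exists_simple_inv h w hne
      have hαp := simple_pos hαs
      have hαr : α ∈ C.roots := h.pos_subset hαp
      set w' := w * refl0 h α with hw'
      have hcard' : (invSet w').card ≤ n := by
        have hlt := invSet_card_lt h hαs hinvα
        rw [← hw'] at hlt
        omega
      obtain ⟨hcone, hpos⟩ := ih w' hcard'
      have hw'α : w' • α ∈ C.pos := by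
        rw [hw', mul_smul, refl0_self h hαr, smul_neg]
        exact hinvα
      have hwexp : w = w' * refl0 h α := by
        rw [hw', mul_assoc, refl0_sq h hαr, mul_one]
      set c := C.pair (C.coroot α) (xi h) with hc
      have hcpos : 0 < c := xi_pos h hαp
      have hkey : xi h - w • xi h = (xi h - w' • xi h) + c • (w' • α) := by
        rw [hwexp, mul_smul, refl0_actX h hαr, smul_sub, smul_zsmul]
        abel
      constructor
      · rw [hkey]
        apply add_mem hcone
        have hmem : (w' • α : C.X) ∈ AddSubmonoid.closure (↑C.pos : Set C.X) :=
          AddSubmonoid.subset_closure hw'α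
        have : c • (w' • α) = c.toNat • (w' • α) := by
          rw [← natCast_zsmul, Int.toNat_of_nonneg hcpos.le]
        rw [this]
        exact AddSubmonoid.nsmul_mem _ hmem _
      · intro _
        rw [hkey, map_add, pair_zsmul]
        have h2 := hgt_pos h hw'α
        have h1 : 0 ≤ C.pair (eta0 h) (xi h - w' • xi h) := by
          by_cases hw'1 : w' = 1
          · rw [hw'1, one_smul, sub_self, map_zero]
          · exact (hpos hw'1).le
        nlinarith
    · have hempty : ∀ β ∈ C.pos, -(w • β) ∉ C.pos := by
        intro β hβ hc
        exact hne ⟨β, Finset.mem_filter.mpr ⟨hβ, hc⟩⟩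
      have hW : w = 1 := no_inv_eq_one h w hempty
      subst hW
      rw [one_smul, sub_self]
      exact ⟨zero_mem _, fun hc => absurd rfl hc⟩

lemma orbit_lemma (w : C.W) :
    (xi h - w • xi h ∈ AddSubmonoid.closure (↑C.pos : Set C.X)) ∧
    (w ≠ 1 → 0 < C.pair (eta0 h) (xi h - w • xi h)) :=
  orbit_aux h (invSet w).card w le_rfl

lemma pair_ge_of_simple (μ : C.Y) (N : ℤ) (hN : 0 ≤ N)
    (hμ : ∀ γ ∈ C.simpleRoots, N ≤ C.pair μ γ) :
    ∀ β ∈ C.pos, N ≤ C.pair μ β := by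
  intro β hβ
  obtain ⟨m, hm, hsum, hne⟩ := decomp h hβ
  rw [← hsum, map_multiset_sum]
  obtain ⟨γ, hγ⟩ := Multiset.exists_mem_of_ne_zero hne
  rw [← Multiset.cons_erase hγ, Multiset.map_cons, Multiset.sum_cons]
  have h1 : N ≤ C.pair μ γ := hμ γ (hm γ hγ)
  have h2 : 0 ≤ ((m.erase γ).map (fun δ => C.pair μ δ)).sum := by
    apply multiset_sum_nonneg
    intro x hx
    obtain ⟨δ, hδ, rfl⟩ := Multiset.mem_map.mp hx
    have := hμ δ (hm δ (Multiset.mem_of_mem_erase hδ))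
    omega
  have hcoe : ((m.erase γ).map (C.pair μ)).sum = ((m.erase γ).map (fun δ => C.pair μ δ)).sum := rfl
  rw [hcoe]
  omega

lemma cone_pair_ge (μ : C.Y) (N : ℤ) (hN : 0 ≤ N)
    (hμ : ∀ γ ∈ C.simpleRoots, N ≤ C.pair μ γ) :
    ∀ x ∈ AddSubmonoid.closure (↑C.pos : Set C.X), x = 0 ∨ N ≤ C.pair μ x := by
  intro x hx
  induction hx using AddSubmonoid.closure_induction with
  | mem y hy => exact Or.inr (pair_ge_of_simple h μ N hN hμ y hy)
  | zero => exact Or.inl rfl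
  | add y z _ _ hy hz =>
    rcases hy with hy | hy
    · rcases hz with hz | hz
      · exact Or.inl (by rw [hy, hz, add_zero])
      · refine Or.inr ?_
        rw [map_add, hy, map_zero]
        omega
    · rcases hz with hz | hz
      · refine Or.inr ?_
        rw [map_add, hz, map_zero]
        omega
      · refine Or.inr ?_
        rw [map_add]
        omega

end Aux
end SemiInf
namespace SemiInf
namespace Aux

variable {C : Ctx} (h : C.IsRootDatum)
include h

omit h in
lemma pair_zsmul_left (c : ℤ) (y : C.Y) (x : C.X) :
    C.pair (c • y) x = c * C.pair y x := by
  rw [map_zsmul]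
  rfl

/-- The functional `⟨-, ξ⟩` on `ℚ ⊗ Y`. -/
noncomputable def Ffun : C.QY →ₗ[ℤ] ℚ :=
  TensorProduct.lift (LinearMap.mk₂ ℤ (fun q y => q * (C.pair y (xi h) : ℚ))
    (fun q q' y => by push_cast; ring)
    (fun c q y => by
      beta_reduce
      simp only [zsmul_eq_mul]
      push_cast
      ring)
    (fun q y y' => by
      beta_reduce
      simp only [map_add, AddMonoidHom.add_apply]
      push_cast
      ring)
    (fun c q y => by
      beta_reduce
      rw [pair_zsmul_left]
      simp only [zsmul_eq_mul]
      push_cast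
      ring))

lemma Ffun_tmul (q : ℚ) (y : C.Y) : Ffun h (q ⊗ₜ[ℤ] y) = q * (C.pair y (xi h) : ℚ) := by
  rw [Ffun]
  exact TensorProduct.lift.tmul _ _

lemma Ffun_ι (y : C.Y) : Ffun h (C.ι y) = (C.pair y (xi h) : ℚ) := by
  rw [Ctx.ι]
  have : (TensorProduct.mk ℤ ℚ C.Y 1) y = (1 : ℚ) ⊗ₜ[ℤ] y := rfl
  change Ffun h ((1 : ℚ) ⊗ₜ[ℤ] y) = _
  rw [Ffun_tmul, one_mul]

lemma Ffun_rho : Ffun h C.rhoCheck =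
    2⁻¹ * (C.pair (∑ β ∈ C.posCoroots, β) (xi h) : ℚ) := by
  rw [Ctx.rhoCheck, Ffun_tmul]

omit h in
lemma actQ_tmul (w : C.W) (q : ℚ) (y : C.Y) :
    C.actQ w (q ⊗ₜ[ℤ] y) = q ⊗ₜ[ℤ] (w • y) := by
  rw [Ctx.actQ]
  exact LinearMap.lTensor_tmul ..

lemma Ffun_actQ_ι (w : C.W) (y : C.Y) :
    Ffun h (C.actQ w (C.ι y)) = (C.pair (w • y) (xi h) : ℚ) := by
  rw [Ctx.ι]
  have : (TensorProduct.mk ℤ ℚ C.Y 1) y = (1 : ℚ) ⊗ₜ[ℤ] y := rfl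
  change Ffun h (C.actQ w ((1 : ℚ) ⊗ₜ[ℤ] y)) = _
  rw [actQ_tmul, Ffun_tmul, one_mul]

lemma Ffun_actQ_rho (w : C.W) : Ffun h (C.actQ w C.rhoCheck) =
    2⁻¹ * (C.pair (w • ∑ β ∈ C.posCoroots, β) (xi h) : ℚ) := by
  rw [Ctx.rhoCheck, actQ_tmul, Ffun_tmul]

lemma Ffun_nonneg {D : C.QY} (hD : D ∈ AddSubmonoid.closure (⇑C.ι '' ↑C.posCoroots)) :
    0 ≤ Ffun h D := by
  induction hD using AddSubmonoid.closure_induction with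
  | mem z hz =>
    obtain ⟨y, hy, rfl⟩ := hz
    obtain ⟨α, hα, rfl⟩ := Finset.mem_image.mp hy
    rw [Ffun_ι]
    have := xi_pos h hα
    push_cast
    exact_mod_cast this.le
  | zero =>
    rw [map_zero]
  | add y z _ _ hy hz =>
    rw [map_add]
    exact add_nonneg hy hz

end Aux
end SemiInf
set_option maxHeartbeats 2000000 in
/-- For every `η ∈ Y` there is `N` such that for every `μ ∈ Y` with
`⟨μ,α⟩ ≥ N` for all simple roots `α`, and every `w ∈ W_f` with `w ≠ 1`, the
element `w(μ+ρ∨) − (μ+η+ρ∨)` of `ℚ ⊗ Y` is not a `ℤ≥0`-linear combination of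
positive coroots. -/
theorem statement13 (C : SemiInf.Ctx) (h : C.IsRootDatum) (η : C.Y) :
    ∃ N : ℕ, ∀ μ : C.Y, (∀ α ∈ C.simpleRoots, (N : ℤ) ≤ C.pair μ α) →
      ∀ w : C.W, w ≠ 1 →
        C.actQ w (C.ι μ + C.rhoCheck) - (C.ι μ + C.ι η + C.rhoCheck) ∉
          AddSubmonoid.closure (⇑C.ι '' ↑C.posCoroots) := by
  classical
  set ξ := SemiInf.Aux.xi h with hξdef
  set S := ∑ β ∈ C.posCoroots, β with hSdef
  set M : ℕ := Finset.univ.sup (fun w : C.W =>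
    (C.pair (w • S) ξ - C.pair S ξ).natAbs + 2 * (C.pair η ξ).natAbs) with hMdef
  refine ⟨M + 1, ?_⟩
  intro μ hμ w hw hmem
  -- the element x = ξ - w⁻¹ • ξ
  have hw1 : w⁻¹ ≠ 1 := fun hc => hw (by rwa [inv_eq_one] at hc)
  obtain ⟨hcone, hpos⟩ := SemiInf.Aux.orbit_lemma h w⁻¹
  have hxne : ξ - w⁻¹ • ξ ≠ 0 := by
    intro hc
    have := hpos hw1
    rw [hξdef] at hc
    rw [hc, map_zero] at this
    omega
  have hxpair : ((M + 1 : ℕ) : ℤ) ≤ C.pair μ (ξ - w⁻¹ • ξ) := by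
    have := SemiInf.Aux.cone_pair_ge h μ ((M + 1 : ℕ) : ℤ) (by exact_mod_cast Nat.zero_le _) hμ
      (ξ - w⁻¹ • ξ) hcone
    rcases this with hc | hc
    · exact absurd hc hxne
    · exact hc
  -- nonnegativity of the functional on the cone
  have hF0 := SemiInf.Aux.Ffun_nonneg h hmem
  -- compute the functional
  rw [map_sub, map_add, map_add, map_add, map_add] at hF0
  rw [SemiInf.Aux.Ffun_actQ_ι, SemiInf.Aux.Ffun_actQ_rho, SemiInf.Aux.Ffun_ι,
    SemiInf.Aux.Ffun_ι, SemiInf.Aux.Ffun_rho] at hF0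
  rw [← hSdef, ← hξdef] at hF0
  -- rewrite ⟨wμ, ξ⟩
  have hww : C.pair (w • μ) ξ = C.pair μ ξ - C.pair μ (ξ - w⁻¹ • ξ) := by
    rw [SemiInf.Aux.pair_inv'' h w μ ξ, map_sub]
    ring
  rw [hww] at hF0
  -- the sup bound
  have hsup : (C.pair (w • S) ξ - C.pair S ξ).natAbs + 2 * (C.pair η ξ).natAbs ≤ M :=
    Finset.le_sup (f := fun w : C.W =>
      (C.pair (w • S) ξ - C.pair S ξ).natAbs + 2 * (C.pair η ξ).natAbs) (Finset.mem_univ w)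
  -- conclude by arithmetic
  set A := C.pair (w • S) ξ - C.pair S ξ with hAdef
  set B := C.pair η ξ with hBdef
  have hq1 : ((M:ℚ) + 1) ≤ (C.pair μ (ξ - w⁻¹ • ξ) : ℚ) := by exact_mod_cast hxpair
  have hq2 : (A : ℚ) ≤ |(A : ℚ)| := le_abs_self _
  have hq3 : -(B : ℚ) ≤ |(B : ℚ)| := neg_le_abs _
  have hq4 : (|(A : ℚ)| + 2 * |(B : ℚ)|) ≤ (M : ℚ) := by
    have hc := Nat.cast_le (α := ℚ) |>.mpr hsup
    push_cast [Nat.cast_natAbs] at hc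
    exact hc
  have hA : (C.pair (w • S) ξ : ℚ) = (C.pair S ξ : ℚ) + (A : ℚ) := by
    rw [hAdef]
    push_cast
    ring
  rw [hA] at hF0
  push_cast at hF0
  linarith
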